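/- The orthogonal projection (in Frobenius norm) of a symmetric matrix M onto the PSD cone equals Σᵢ max(λᵢ(M), 0) uᵢ uᵢᵀ, where M = Σᵢ λᵢ(M) uᵢ uᵢᵀ is a spectral decomposition of M with orthonormal eigenvectors uᵢ. -/

import Mathlib

open Matrix

private lemma trace_vmv_mul (m : ℕ) (v : Fin m → ℝ) (Q : Matrix (Fin m) (Fin m) ℝ) :
    (vecMulVec v v * Q).trace = v ⬝ᵥ Q *ᵥ v := by
  simp only [trace, diag, mul_apply, vecMulVec_apply, dotProduct, mulVec, Finset.mul_sum]
  rw [Finset.sum_comm]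
  exact Finset.sum_congr rfl fun j _ => Finset.sum_congr rfl fun i _ => by ring

private lemma vmv_mulVec (m : ℕ) (v x : Fin m → ℝ) : vecMulVec v v *ᵥ x = (v ⬝ᵥ x) • v := by
  ext i
  simp only [mulVec, vecMulVec_apply, dotProduct, Pi.smul_apply, smul_eq_mul, Finset.sum_mul]
  exact Finset.sum_congr rfl fun j _ => by ring

private lemma sum_mulVec' (m : ℕ) (A : Fin m → Matrix (Fin m) (Fin m) ℝ) (x : Fin m → ℝ) :
    (∑ i, A i) *ᵥ x = ∑ i, (A i *ᵥ x) := by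
  ext j
  simp only [mulVec, dotProduct, Finset.sum_apply, Matrix.sum_apply, Finset.sum_mul]
  rw [Finset.sum_comm]

private lemma dot_sum' (m : ℕ) (v : Fin m → ℝ) (w : Fin m → Fin m → ℝ) :
    v ⬝ᵥ (∑ i, w i) = ∑ i, v ⬝ᵥ w i := by
  simp only [dotProduct, Finset.sum_apply, Finset.mul_sum]
  rw [Finset.sum_comm]

private lemma trace_sq (m : ℕ) (A : Matrix (Fin m) (Fin m) ℝ) :
    (A * Aᵀ).trace = ∑ i, ∑ j, (A i j)^2 := by
  simp [trace, mul_apply, sq]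

private lemma vmv_transpose (m : ℕ) (v : Fin m → ℝ) : (vecMulVec v v)ᵀ = vecMulVec v v := by
  ext i j; simp [vecMulVec_apply, mul_comm]

private lemma trace_sum_mul (m : ℕ) (c : Fin m → ℝ) (u : Fin m → Fin m → ℝ)
    (Q : Matrix (Fin m) (Fin m) ℝ) :
    ((∑ i, c i • vecMulVec (u i) (u i)) * Q).trace = ∑ i, c i * (u i ⬝ᵥ Q *ᵥ u i) := by
  rw [Finset.sum_mul, trace_sum]
  exact Finset.sum_congr rfl fun i _ => by
    rw [smul_mul_assoc, trace_smul, trace_vmv_mul]; rfl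

theorem projection_onto_psd_cone (m : ℕ) (M : Matrix (Fin m) (Fin m) ℝ)
    (lam : Fin m → ℝ) (u : Fin m → Fin m → ℝ) (hM : M.IsSymm)
    (horth : ∀ i j, u i ⬝ᵥ u j = if i = j then (1 : ℝ) else 0)
    (hspec : M = ∑ i, lam i • vecMulVec (u i) (u i)) :
    (∑ i, max (lam i) 0 • vecMulVec (u i) (u i)).PosSemidef ∧
    (∀ Q : Matrix (Fin m) (Fin m) ℝ, Q.PosSemidef →
      ((M - ∑ i, max (lam i) 0 • vecMulVec (u i) (u i)) *
        (M - ∑ i, max (lam i) 0 • vecMulVec (u i) (u i))ᵀ).trace ≤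
      ((M - Q) * (M - Q)ᵀ).trace) ∧
    (∀ Q : Matrix (Fin m) (Fin m) ℝ, Q.PosSemidef →
      ((M - Q) * (M - Q)ᵀ).trace =
        ((M - ∑ i, max (lam i) 0 • vecMulVec (u i) (u i)) *
          (M - ∑ i, max (lam i) 0 • vecMulVec (u i) (u i))ᵀ).trace →
      Q = ∑ i, max (lam i) 0 • vecMulVec (u i) (u i)) := by
  set P : Matrix (Fin m) (Fin m) ℝ := ∑ i, max (lam i) 0 • vecMulVec (u i) (u i) with hP
  set N : Matrix (Fin m) (Fin m) ℝ := M - P with hNdef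
  -- N as a spectral sum
  have hN : N = ∑ i, (lam i - max (lam i) 0) • vecMulVec (u i) (u i) := by
    rw [hNdef, hspec, hP, ← Finset.sum_sub_distrib]
    exact Finset.sum_congr rfl fun i _ => by rw [sub_smul]
  -- P is symmetric
  have hPt : Pᵀ = P := by
    rw [hP, transpose_sum]
    exact Finset.sum_congr rfl fun i _ => by rw [transpose_smul, vmv_transpose]
  -- P *ᵥ u i = max (lam i) 0 • u i
  have hPu : ∀ i, P *ᵥ u i = max (lam i) 0 • u i := by
    intro i
    rw [hP, sum_mulVec']
    rw [Finset.sum_eq_single i]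
    · rw [smul_mulVec, vmv_mulVec, horth, if_pos rfl, one_smul]
    · intro j _ hj
      rw [smul_mulVec, vmv_mulVec, horth, if_neg hj, zero_smul, smul_zero]
    · intro h; exact absurd (Finset.mem_univ i) h
  -- P is PSD
  have hPpsd : P.PosSemidef := by
    rw [posSemidef_iff_dotProduct_mulVec]
    constructor
    · show Pᴴ = P
      rw [conjTranspose_eq_transpose_of_trivial, hPt]
    · intro x
      show 0 ≤ star x ⬝ᵥ P *ᵥ x
      have : star x ⬝ᵥ P *ᵥ x = ∑ i, max (lam i) 0 * (u i ⬝ᵥ x)^2 := by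
        rw [hP, sum_mulVec', dot_sum']
        refine Finset.sum_congr rfl fun i _ => ?_
        rw [smul_mulVec, vmv_mulVec, smul_smul, dotProduct_smul]
        have : star x ⬝ᵥ u i = u i ⬝ᵥ x := by
          simp [dotProduct, mul_comm]
        rw [smul_eq_mul, this, sq]; ring
      rw [this]
      exact Finset.sum_nonneg fun i _ =>
        mul_nonneg (le_max_right _ _) (sq_nonneg _)
  -- trace(N * P) = 0
  have hNP : (N * Pᵀ).trace = 0 := by
    rw [hPt, hN, trace_sum_mul]
    refine Finset.sum_eq_zero fun i _ => ?_
    rw [hPu i, dotProduct_smul, horth, if_pos rfl, smul_eq_mul, mul_one]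
    rcases le_or_gt (lam i) 0 with h | h
    · rw [max_eq_right h, mul_zero]
    · rw [max_eq_left h.le, sub_self, zero_mul]
  -- trace(N * Q) ≤ 0 for PSD Q
  have hNQ : ∀ Q : Matrix (Fin m) (Fin m) ℝ, Q.PosSemidef → (N * Qᵀ).trace ≤ 0 := by
    intro Q hQ
    have hQt : Qᵀ = Q := by
      have := hQ.1
      rwa [IsHermitian, conjTranspose_eq_transpose_of_trivial] at this
    rw [hQt, hN, trace_sum_mul]
    refine Finset.sum_nonpos fun i _ => ?_
    have h1 : lam i - max (lam i) 0 ≤ 0 := sub_nonpos.2 (le_max_left _ _)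
    have h2 : 0 ≤ u i ⬝ᵥ Q *ᵥ u i := hQ.dotProduct_mulVec_nonneg (u i)
    exact mul_nonpos_of_nonpos_of_nonneg h1 h2
  have key : ∀ Q : Matrix (Fin m) (Fin m) ℝ,
      ((M - Q) * (M - Q)ᵀ).trace
        = (N * Nᵀ).trace + 2 * (N * (P - Q)ᵀ).trace + ((P - Q) * (P - Q)ᵀ).trace := by
    intro Q
    have hMQ : M - Q = N + (P - Q) := by rw [hNdef]; abel
    rw [hMQ]
    have expand : (N + (P - Q)) * (N + (P - Q))ᵀ
        = N * Nᵀ + N * (P - Q)ᵀ + (P - Q) * Nᵀ + (P - Q) * (P - Q)ᵀ := by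
      rw [transpose_add]; noncomm_ring
    rw [expand, trace_add, trace_add, trace_add]
    have : ((P - Q) * Nᵀ).trace = (N * (P - Q)ᵀ).trace := by
      rw [← trace_transpose, transpose_mul, transpose_transpose]
    rw [this]; ring
  have hNN0 : ((M - P) * (M - P)ᵀ).trace = (N * Nᵀ).trace := by rw [← hNdef]
  refine ⟨hPpsd, ?_, ?_⟩
  · intro Q hQ
    rw [key Q, hNN0]
    have h1 : 0 ≤ (N * (P - Q)ᵀ).trace := by
      rw [transpose_sub, mul_sub, trace_sub, hNP]
      linarith [hNQ Q hQ]
    have h2 : 0 ≤ ((P - Q) * (P - Q)ᵀ).trace := by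
      rw [trace_sq]
      exact Finset.sum_nonneg fun i _ => Finset.sum_nonneg fun j _ => sq_nonneg _
    linarith
  · intro Q hQ heq
    rw [key Q, hNN0] at heq
    have h1 : 0 ≤ (N * (P - Q)ᵀ).trace := by
      rw [transpose_sub, mul_sub, trace_sub, hNP]
      linarith [hNQ Q hQ]
    have h2 : 0 ≤ ((P - Q) * (P - Q)ᵀ).trace := by
      rw [trace_sq]
      exact Finset.sum_nonneg fun i _ => Finset.sum_nonneg fun j _ => sq_nonneg _
    have hzero : ((P - Q) * (P - Q)ᵀ).trace = 0 := by linarith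
    rw [trace_sq] at hzero
    have : ∀ i j, (P - Q) i j = 0 := by
      intro i j
      have h3 : ∀ i ∈ Finset.univ, (0:ℝ) ≤ ∑ j, ((P - Q) i j)^2 :=
        fun i _ => Finset.sum_nonneg fun j _ => sq_nonneg _
      have h4 := (Finset.sum_eq_zero_iff_of_nonneg h3).1 hzero i (Finset.mem_univ i)
      have h5 := (Finset.sum_eq_zero_iff_of_nonneg (fun j _ => sq_nonneg _)).1 h4 j (Finset.mem_univ j)
      exact pow_eq_zero_iff (by norm_num) |>.1 h5
    have : P - Q = 0 := by ext i j; exact this i j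
    have := sub_eq_zero.1 this
    rw [← this]
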